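/- Let G be a finite simple graph with exactly 7 edges, exactly 12 vertices of odd degree, and no isolated vertices. Then every connected component of G is isomorphic to the path P_2 on 2 vertices, the path P_3 on 3 vertices, or the star K_{1,3}. -/

import Mathlib

open SimpleGraph

lemma walk_mem_closed {V : Type} {G : SimpleGraph V} {S : Set V}
    (hcl : ∀ a ∈ S, ∀ b, G.Adj a b → b ∈ S) :
    ∀ {x y : V} (_ : G.Walk x y), x ∈ S → y ∈ S := by
  intro x y p
  induction p with
  | nil => exact id
  | cons h _ ih => exact fun hx => ih (hcl _ hx _ h)



lemma iso_P2 {V : Type} (G : SimpleGraph V) {u w : V} (huw : G.Adj u w)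
    {s : Set V} (hs : s = {u, w}) :
    Nonempty (G.induce s ≃g SimpleGraph.pathGraph 2) := by
  classical
  subst hs
  have hne : u ≠ w := huw.ne
  refine ⟨⟨⟨fun x => if x.1 = u then 0 else 1,
            fun i => if i = 0 then ⟨u, by simp⟩ else ⟨w, by simp⟩, ?_, ?_⟩, ?_⟩⟩
  · rintro ⟨x, hx⟩
    simp only [Set.mem_insert_iff, Set.mem_singleton_iff] at hx
    rcases hx with rfl | rfl
    · simp
    · simp [Ne.symm hne]
  · intro i
    fin_cases i
    · simp
    · simp [Ne.symm hne]
  · rintro ⟨x, hx⟩ ⟨y, hy⟩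
    simp only [Set.mem_insert_iff, Set.mem_singleton_iff] at hx hy
    rcases hx with rfl | rfl <;> rcases hy with rfl | rfl <;>
      simp [comap_adj, pathGraph_adj, hne, Ne.symm hne, huw, huw.symm]



lemma iso_P3 {V : Type} (G : SimpleGraph V) {a x b : V}
    (hxa : G.Adj x a) (hxb : G.Adj x b) (hab : ¬ G.Adj a b) (hne : a ≠ b)
    {s : Set V} (hs : s = {a, x, b}) :
    Nonempty (G.induce s ≃g SimpleGraph.pathGraph 3) := by
  classical
  subst hs
  have hax : a ≠ x := hxa.ne'
  have hba : ¬ G.Adj b a := fun h => hab h.symm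
  have hbx : b ≠ x := hxb.ne'
  refine ⟨⟨⟨fun y => if y.1 = a then 0 else if y.1 = x then 1 else 2,
            fun i => if i = 0 then ⟨a, by simp⟩ else if i = 1 then ⟨x, by simp⟩
              else ⟨b, by simp⟩, ?_, ?_⟩, ?_⟩⟩
  · rintro ⟨y, hy⟩
    simp only [Set.mem_insert_iff, Set.mem_singleton_iff] at hy
    rcases hy with rfl | rfl | rfl
    · simp
    · simp [Ne.symm hax]
    · simp [Ne.symm hne, hbx]
  · intro i
    fin_cases i
    · simp
    · simp [Ne.symm hax]
    · simp [Ne.symm hne, hbx]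
  · rintro ⟨y, hy⟩ ⟨z, hz⟩
    simp only [Set.mem_insert_iff, Set.mem_singleton_iff] at hy hz
    rcases hy with rfl | rfl | rfl <;> rcases hz with rfl | rfl | rfl <;>
      simp [comap_adj, pathGraph_adj, hax, Ne.symm hax, hbx, Ne.symm hbx, hne,
        Ne.symm hne, hxa, hxa.symm, hxb, hxb.symm, hab, hba]

lemma iso_K13 {V : Type} (G : SimpleGraph V) {x a b c : V}
    (hxa : G.Adj x a) (hxb : G.Adj x b) (hxc : G.Adj x c)
    (hab : ¬ G.Adj a b) (hac : ¬ G.Adj a c) (hbc : ¬ G.Adj b c)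
    (nab : a ≠ b) (nac : a ≠ c) (nbc : b ≠ c)
    {s : Set V} (hs : s = {x, a, b, c}) :
    Nonempty (G.induce s ≃g completeBipartiteGraph (Fin 1) (Fin 3)) := by
  classical
  subst hs
  have nxa : x ≠ a := hxa.ne
  have nxb : x ≠ b := hxb.ne
  have nxc : x ≠ c := hxc.ne
  have hba : ¬ G.Adj b a := fun h => hab h.symm
  have hca : ¬ G.Adj c a := fun h => hac h.symm
  have hcb : ¬ G.Adj c b := fun h => hbc h.symm
  refine ⟨⟨⟨fun y => if y.1 = x then Sum.inl 0 else if y.1 = a then Sum.inr 0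
              else if y.1 = b then Sum.inr 1 else Sum.inr 2,
            fun i => Sum.rec (fun _ => ⟨x, by simp⟩)
              (fun j => if j = 0 then ⟨a, by simp⟩ else if j = 1 then ⟨b, by simp⟩
                else ⟨c, by simp⟩) i, ?_, ?_⟩, ?_⟩⟩
  · rintro ⟨y, hy⟩
    simp only [Set.mem_insert_iff, Set.mem_singleton_iff] at hy
    rcases hy with rfl | rfl | rfl | rfl
    · simp
    · simp [Ne.symm nxa]
    · simp [Ne.symm nxb, Ne.symm nab]
    · simp [Ne.symm nxc, Ne.symm nac, Ne.symm nbc]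
  · intro i
    rcases i with j | j
    · fin_cases j; simp
    · fin_cases j
      · simp [Ne.symm nxa]
      · simp [Ne.symm nxb, Ne.symm nab]
      · simp [Ne.symm nxc, Ne.symm nac, Ne.symm nbc]
  · rintro ⟨y, hy⟩ ⟨z, hz⟩
    simp only [Set.mem_insert_iff, Set.mem_singleton_iff] at hy hz
    rcases hy with rfl | rfl | rfl | rfl <;> rcases hz with rfl | rfl | rfl | rfl <;>
      simp [comap_adj, nxa, Ne.symm nxa, nxb, Ne.symm nxb, nxc, Ne.symm nxc,
        nab, Ne.symm nab, nac, Ne.symm nac, nbc, Ne.symm nbc,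
        hxa, hxa.symm, hxb, hxb.symm, hxc, hxc.symm,
        hab, hac, hbc, hba, hca, hcb]


open SimpleGraph Finset

section
variable {V : Type} [Fintype V] (G : SimpleGraph V) [DecidableRel G.Adj]

lemma degree_sum_facts
    (hedges : G.edgeSet.ncard = 7)
    (hodd : {v : V | Odd ((G.neighborSet v).ncard)}.ncard = 12)
    (hiso : ∀ v : V, (G.neighborSet v).ncard ≠ 0) :
    (∀ v, (G.neighborSet v).ncard ≤ 3) ∧
    (∀ v w, 2 ≤ (G.neighborSet v).ncard → 2 ≤ (G.neighborSet w).ncard → v = w) := by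
  classical
  have hdeg : ∀ v, (G.neighborSet v).ncard = G.degree v := by
    intro v
    rw [Set.ncard_eq_toFinset_card', Set.toFinset_card, card_neighborSet_eq_degree]
  have hsum : ∑ v, G.degree v = 14 := by
    rw [G.sum_degrees_eq_twice_card_edges]
    have : #G.edgeFinset = 7 := by
      rw [← hedges, Set.ncard_eq_toFinset_card']
      congr 1
    omega
  have hd1 : ∀ v, 1 ≤ G.degree v := by
    intro v; have := hiso v; rw [hdeg v] at this; omega
  -- odd set as finset
  have hoddF : #(Finset.univ.filter (fun v => Odd (G.degree v))) = 12 := by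
    have : {v : V | Odd ((G.neighborSet v).ncard)}.ncard
        = #(Finset.univ.filter (fun v => Odd (G.degree v))) := by
      rw [Set.ncard_eq_toFinset_card']
      congr 1
      ext v
      simp [hdeg]
    omega
  have hcard : 12 ≤ Fintype.card V := by
    rw [← hoddF]; exact Finset.card_le_card (Finset.filter_subset _ _)
  have key : ∀ v : V, G.degree v + (Fintype.card V - 1) ≤ 14 := by
    intro v
    have h1 : G.degree v + ∑ u ∈ Finset.univ.erase v, G.degree u = 14 := by
      rw [Finset.add_sum_erase _ (fun u => G.degree u) (Finset.mem_univ v)]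
      exact hsum
    have h2 : #(Finset.univ.erase v) ≤ ∑ u ∈ Finset.univ.erase v, G.degree u := by
      calc #(Finset.univ.erase v) = ∑ _u ∈ Finset.univ.erase v, 1 := by simp
        _ ≤ _ := Finset.sum_le_sum (fun u _ => hd1 u)
    have h3 : #(Finset.univ.erase v) = Fintype.card V - 1 := by
      rw [Finset.card_erase_of_mem (Finset.mem_univ v), Finset.card_univ]
    omega
  constructor
  · intro v
    have := key v
    rw [hdeg]
    omega
  · intro v w hv hw
    rw [hdeg] at hv hw
    by_contra hvw
    have h1 : G.degree v + (G.degree w + ∑ u ∈ (Finset.univ.erase v).erase w, G.degree u)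
        = 14 := by
      have e1 : G.degree w + ∑ u ∈ (Finset.univ.erase v).erase w, G.degree u
          = ∑ u ∈ Finset.univ.erase v, G.degree u := by
        rw [Finset.add_sum_erase _ (fun u => G.degree u)
          (Finset.mem_erase.mpr ⟨Ne.symm hvw, Finset.mem_univ w⟩)]
      rw [e1, Finset.add_sum_erase _ (fun u => G.degree u) (Finset.mem_univ v)]
      exact hsum
    have h2 : #((Finset.univ.erase v).erase w) ≤
        ∑ u ∈ (Finset.univ.erase v).erase w, G.degree u := by
      calc #((Finset.univ.erase v).erase w)
          = ∑ _u ∈ (Finset.univ.erase v).erase w, 1 := by simp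
        _ ≤ _ := Finset.sum_le_sum (fun u _ => hd1 u)
    have h3 : #((Finset.univ.erase v).erase w) = Fintype.card V - 2 := by
      rw [Finset.card_erase_of_mem (by simp [Ne.symm hvw]),
        Finset.card_erase_of_mem (Finset.mem_univ v), Finset.card_univ]
      omega
    -- so card V = 12, hence every vertex has odd degree
    have hc12 : Fintype.card V = 12 := by omega
    have hfull : Finset.univ.filter (fun v => Odd (G.degree v)) = Finset.univ :=
      Finset.eq_univ_of_card _ (by rw [hoddF, hc12])
    have hov : Odd (G.degree v) := by
      have : v ∈ Finset.univ.filter (fun v => Odd (G.degree v)) := by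
        rw [hfull]; exact Finset.mem_univ v
      simpa using this
    have how : Odd (G.degree w) := by
      have : w ∈ Finset.univ.filter (fun v => Odd (G.degree v)) := by
        rw [hfull]; exact Finset.mem_univ w
      simpa using this
    rw [Nat.odd_iff] at hov how
    omega

end

section MainProof

open SimpleGraph

/-- In a finite simple graph with exactly 7 edges, exactly 12 vertices of odd
degree, and no isolated vertices, every connected component is isomorphic to
the path P₂ (on 2 vertices), the path P₃ (on 3 vertices), or the star K_{1,3}. -/
theorem component_is_P2_P3_or_K13
    {V : Type} [Finite V] (G : SimpleGraph V)
    (hedges : G.edgeSet.ncard = 7)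
    (hodd : {v : V | Odd ((G.neighborSet v).ncard)}.ncard = 12)
    (hiso : ∀ v : V, (G.neighborSet v).ncard ≠ 0) :
    ∀ c : G.ConnectedComponent,
      Nonempty (G.induce c.supp ≃g SimpleGraph.pathGraph 2) ∨
      Nonempty (G.induce c.supp ≃g SimpleGraph.pathGraph 3) ∨
      Nonempty (G.induce c.supp ≃g completeBipartiteGraph (Fin 1) (Fin 3)) := by
  classical
  letI : Fintype V := Fintype.ofFinite V
  obtain ⟨hle3, huniq⟩ := degree_sum_facts G hedges hodd hiso
  have hd1 : ∀ v, 1 ≤ (G.neighborSet v).ncard :=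
    fun v => Nat.one_le_iff_ne_zero.mpr (hiso v)
  intro c
  -- generic: supp of the component equals S if S is a closed set meeting c
  have supp_eq : ∀ (x : V) (S : Set V), G.connectedComponentMk x = c → x ∈ S →
      S ⊆ c.supp → (∀ a ∈ S, ∀ b, G.Adj a b → b ∈ S) → c.supp = S := by
    intro x S hxc hxS hSsub hcl
    refine Set.Subset.antisymm ?_ hSsub
    intro u hu
    rw [ConnectedComponent.mem_supp_iff] at hu
    have hr : G.Reachable x u := ConnectedComponent.exact (hxc.trans hu.symm)
    obtain ⟨p⟩ := hr
    exact walk_mem_closed hcl p hxS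
  by_cases hhub : ∃ x, G.connectedComponentMk x = c ∧ 2 ≤ (G.neighborSet x).ncard
  · obtain ⟨x, hxc, hx2⟩ := hhub
    have hx3 := hle3 x
    -- any neighbor of x has degree 1 and its only neighbor is x
    have hnbr : ∀ a, G.Adj x a → G.neighborSet a = {x} := by
      intro a ha
      have hax : a ≠ x := ha.ne'
      have hda : (G.neighborSet a).ncard = 1 := by
        rcases Nat.lt_or_ge (G.neighborSet a).ncard 2 with h | h
        · have := hd1 a; omega
        · exact absurd (huniq a x h hx2) hax
      obtain ⟨y, hy⟩ := Set.ncard_eq_one.mp hda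
      have hxy : x ∈ G.neighborSet a := (G.mem_neighborSet a x).mpr ha.symm
      rw [hy, Set.mem_singleton_iff] at hxy
      rw [hy, hxy]
    have hd23 : (G.neighborSet x).ncard = 2 ∨ (G.neighborSet x).ncard = 3 := by omega
    rcases hd23 with hdx | hdx
    · -- degree 2 : path P₃
      obtain ⟨a, b, hab, hset⟩ := Set.ncard_eq_two.mp hdx
      have hxa : G.Adj x a := by
        have : a ∈ G.neighborSet x := by rw [hset]; exact Set.mem_insert _ _
        exact this
      have hxb : G.Adj x b := by
        have : b ∈ G.neighborSet x := by
          rw [hset]; exact Set.mem_insert_iff.mpr (Or.inr rfl)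
        exact this
      have hna := hnbr a hxa
      have hnb := hnbr b hxb
      have hnab : ¬ G.Adj a b := by
        intro h
        have hb : b ∈ G.neighborSet a := (G.mem_neighborSet a b).mpr h
        rw [hna, Set.mem_singleton_iff] at hb
        exact hxb.ne' hb
      have hsupp : c.supp = {a, x, b} := by
        apply supp_eq a _ ((ConnectedComponent.connectedComponentMk_eq_of_adj hxa.symm).trans hxc)
          (Set.mem_insert _ _)
        · rintro p (rfl | rfl | rfl) <;> rw [ConnectedComponent.mem_supp_iff]
          · exact (ConnectedComponent.connectedComponentMk_eq_of_adj hxa.symm).trans hxc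
          · exact hxc
          · exact (ConnectedComponent.connectedComponentMk_eq_of_adj hxb.symm).trans hxc
        · rintro p (rfl | rfl | rfl) q hq
          · have : q ∈ G.neighborSet p := (G.mem_neighborSet p q).mpr hq
            rw [hna, Set.mem_singleton_iff] at this
            simp only [Set.mem_insert_iff, Set.mem_singleton_iff]
            tauto
          · have : q ∈ G.neighborSet p := (G.mem_neighborSet p q).mpr hq
            rw [hset] at this
            simp only [Set.mem_insert_iff, Set.mem_singleton_iff] at this ⊢
            tauto
          · have : q ∈ G.neighborSet p := (G.mem_neighborSet p q).mpr hq
            rw [hnb, Set.mem_singleton_iff] at this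
            simp only [Set.mem_insert_iff, Set.mem_singleton_iff]
            tauto
      exact Or.inr (Or.inl (iso_P3 G hxa hxb hnab hab hsupp))
    · -- degree 3 : star K₁,₃
      obtain ⟨a, b, z, nab, naz, nbz, hset⟩ := Set.ncard_eq_three.mp hdx
      have hxa : G.Adj x a := by
        have : a ∈ G.neighborSet x := by rw [hset]; exact Set.mem_insert _ _
        exact this
      have hxb : G.Adj x b := by
        have : b ∈ G.neighborSet x := by rw [hset]; simp
        exact this
      have hxz : G.Adj x z := by
        have : z ∈ G.neighborSet x := by
          rw [hset]; exact Set.mem_insert_iff.mpr (Or.inr (Or.inr rfl))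
        exact this
      have hna := hnbr a hxa
      have hnb := hnbr b hxb
      have hnz := hnbr z hxz
      have leaf_nadj : ∀ p q, G.neighborSet p = {x} → q ≠ x → ¬ G.Adj p q := by
        intro p q hp hq h
        have : q ∈ G.neighborSet p := (G.mem_neighborSet p q).mpr h
        rw [hp, Set.mem_singleton_iff] at this
        exact hq this
      have hsupp : c.supp = {x, a, b, z} := by
        apply supp_eq x _ hxc (Set.mem_insert _ _)
        · rintro p (rfl | rfl | rfl | rfl) <;> rw [ConnectedComponent.mem_supp_iff]
          · exact hxc
          · exact (ConnectedComponent.connectedComponentMk_eq_of_adj hxa.symm).trans hxc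
          · exact (ConnectedComponent.connectedComponentMk_eq_of_adj hxb.symm).trans hxc
          · exact (ConnectedComponent.connectedComponentMk_eq_of_adj hxz.symm).trans hxc
        · rintro p (rfl | rfl | rfl | rfl) q hq
          · have : q ∈ G.neighborSet p := (G.mem_neighborSet p q).mpr hq
            rw [hset] at this
            simp only [Set.mem_insert_iff, Set.mem_singleton_iff] at this ⊢
            tauto
          · have : q ∈ G.neighborSet p := (G.mem_neighborSet p q).mpr hq
            rw [hna, Set.mem_singleton_iff] at this
            simp only [Set.mem_insert_iff, Set.mem_singleton_iff]
            tauto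
          · have : q ∈ G.neighborSet p := (G.mem_neighborSet p q).mpr hq
            rw [hnb, Set.mem_singleton_iff] at this
            simp only [Set.mem_insert_iff, Set.mem_singleton_iff]
            tauto
          · have : q ∈ G.neighborSet p := (G.mem_neighborSet p q).mpr hq
            rw [hnz, Set.mem_singleton_iff] at this
            simp only [Set.mem_insert_iff, Set.mem_singleton_iff]
            tauto
      exact Or.inr (Or.inr (iso_K13 G hxa hxb hxz
        (leaf_nadj a b hna hxb.ne') (leaf_nadj a z hna hxz.ne')
        (leaf_nadj b z hnb hxz.ne') nab naz nbz hsupp))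
  · -- no hub : all degrees 1 on this component, path P₂
    push_neg at hhub
    obtain ⟨v, hv⟩ := c.exists_rep
    have hv : G.connectedComponentMk v = c := hv
    have hdv : (G.neighborSet v).ncard = 1 := by
      have := hhub v hv; have := hd1 v; omega
    obtain ⟨w, hw⟩ := Set.ncard_eq_one.mp hdv
    have hvw : G.Adj v w := by
      have : w ∈ G.neighborSet v := by rw [hw]; exact rfl
      exact this
    have hwc : G.connectedComponentMk w = c :=
      (ConnectedComponent.connectedComponentMk_eq_of_adj hvw.symm).trans hv
    have hdw : (G.neighborSet w).ncard = 1 := by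
      have := hhub w hwc; have := hd1 w; omega
    obtain ⟨w', hw'⟩ := Set.ncard_eq_one.mp hdw
    have hvw' : v ∈ G.neighborSet w := (G.mem_neighborSet w v).mpr hvw.symm
    rw [hw', Set.mem_singleton_iff] at hvw'
    rw [← hvw'] at hw'
    have hsupp : c.supp = {v, w} := by
      apply supp_eq v _ hv (Set.mem_insert _ _)
      · rintro p (rfl | rfl) <;> rw [ConnectedComponent.mem_supp_iff]
        · exact hv
        · exact hwc
      · rintro p (rfl | rfl) q hq
        · have : q ∈ G.neighborSet p := (G.mem_neighborSet p q).mpr hq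
          rw [hw, Set.mem_singleton_iff] at this
          simp only [Set.mem_insert_iff, Set.mem_singleton_iff]
          tauto
        · have : q ∈ G.neighborSet p := (G.mem_neighborSet p q).mpr hq
          rw [hw', Set.mem_singleton_iff] at this
          simp only [Set.mem_insert_iff, Set.mem_singleton_iff]
          tauto
    exact Or.inl (iso_P2 G hvw hsupp)

end MainProof
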